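/- arXiv:1503.02592 — 2 statements merged into one kernel-verified Lean document; each statement's English description precedes it below -/
import Mathlib

section
/- The number of operations of the sieve of Eratosthenes up to n, namely ∑_{p ≤ √n, p prime} ⌊n/p⌋, is O(n log log n). -/
open Finset

/-- Chebyshev-type count: primes in `[2^k, 2^(k+1)]` number at most `2^(k+2)/k`. -/
lemma erato_count (k : ℕ) :
    ((Finset.range (2 ^ (k + 1) + 1)).filter
      (fun p => Nat.Prime p ∧ 2 ^ k ≤ p)).card * k ≤ 2 ^ (k + 2) := by
  set F := (Finset.range (2 ^ (k + 1) + 1)).filter (fun p => Nat.Prime p ∧ 2 ^ k ≤ p) with hF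
  have hsub : F ⊆ (Finset.range (2 ^ (k + 1) + 1)).filter Nat.Prime := by
    intro p hp
    simp only [hF, Finset.mem_filter] at hp ⊢
    exact ⟨hp.1, hp.2.1⟩
  have hdvd : ∏ p ∈ F, p ∣ primorial (2 ^ (k + 1)) := by
    unfold primorial
    exact Finset.prod_dvd_prod_of_subset _ _ _ hsub
  have h1 : (2 ^ k) ^ F.card ≤ ∏ p ∈ F, p := by
    apply Finset.pow_card_le_prod
    intro p hp
    exact (Finset.mem_filter.mp hp).2.2
  have h2 : ∏ p ∈ F, p ≤ 4 ^ (2 ^ (k + 1)) :=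
    (Nat.le_of_dvd (primorial_pos _) hdvd).trans (primorial_le_4_pow _)
  have h3 : (2 : ℕ) ^ (k * F.card) ≤ 2 ^ (2 ^ (k + 2)) := by
    calc (2 : ℕ) ^ (k * F.card) = (2 ^ k) ^ F.card := by rw [pow_mul]
    _ ≤ 4 ^ (2 ^ (k + 1)) := h1.trans h2
    _ = 2 ^ (2 ^ (k + 2)) := by
        rw [show (4 : ℕ) = 2 ^ 2 by norm_num, ← pow_mul, pow_succ (2:ℕ) (k+1)]
        ring_nf
  have := (Nat.pow_le_pow_iff_right (by norm_num : 1 < 2)).mp h3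
  rwa [mul_comm]

/-- Mertens-type bound: `∑_{p ≤ n} 1/p ≤ 4 (1 + log (log₂ n))`. -/
lemma erato_mertens (n : ℕ) (hn : 3 ≤ n) :
    ∑ p ∈ (Finset.range (n + 1)).filter Nat.Prime, ((p : ℝ))⁻¹ ≤
      4 * (1 + Real.log (Nat.log 2 n)) := by
  set K := Nat.log 2 n with hK
  have hmaps : ∀ p ∈ (Finset.range (n + 1)).filter Nat.Prime,
      Nat.log 2 p ∈ Finset.Icc 1 K := by
    intro p hp
    simp only [Finset.mem_filter, Finset.mem_range] at hp
    have hp2 : 2 ≤ p := hp.2.two_le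
    refine Finset.mem_Icc.mpr ⟨?_, Nat.log_mono_right (by omega)⟩
    exact (Nat.le_log_iff_pow_le (by norm_num) (by omega : p ≠ 0)).mpr
      (show 2 ^ 1 ≤ p by omega)
  have hfib := Finset.sum_fiberwise_of_maps_to hmaps (fun p => ((p : ℝ))⁻¹)
  rw [← hfib]
  have hinner : ∀ k ∈ Finset.Icc 1 K,
      (∑ p ∈ ((Finset.range (n + 1)).filter Nat.Prime).filter
          (fun p => Nat.log 2 p = k), ((p : ℝ))⁻¹) ≤ 4 * (k : ℝ)⁻¹ := by
    intro k hk
    have hk1 : 1 ≤ k := (Finset.mem_Icc.mp hk).1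
    set G := ((Finset.range (n + 1)).filter Nat.Prime).filter
        (fun p => Nat.log 2 p = k) with hG
    have hGsub : G ⊆ (Finset.range (2 ^ (k + 1) + 1)).filter
        (fun p => Nat.Prime p ∧ 2 ^ k ≤ p) := by
      intro p hp
      simp only [hG, Finset.mem_filter, Finset.mem_range] at hp ⊢
      have hp0 : p ≠ 0 := hp.1.2.pos.ne'
      have hlow : 2 ^ k ≤ p := hp.2 ▸ Nat.pow_log_le_self 2 hp0
      have hhigh : p < 2 ^ (k + 1) := hp.2 ▸ Nat.lt_pow_succ_log_self (by norm_num) p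
      exact ⟨by omega, hp.1.2, hlow⟩
    have hcard : (G.card : ℝ) * k ≤ 2 ^ (k + 2) := by
      have h1 : G.card * k ≤ 2 ^ (k + 2) :=
        le_trans (Nat.mul_le_mul_right k (Finset.card_le_card hGsub)) (erato_count k)
      exact_mod_cast h1
    have hterm : ∀ p ∈ G, ((p : ℝ))⁻¹ ≤ ((2 : ℝ) ^ k)⁻¹ := by
      intro p hp
      have := (Finset.mem_filter.mp (hGsub hp)).2.2
      have h2 : (2 : ℝ) ^ k ≤ p := by exact_mod_cast this
      exact inv_anti₀ (by positivity) h2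
    have hsum : (∑ p ∈ G, ((p : ℝ))⁻¹) ≤ G.card * ((2 : ℝ) ^ k)⁻¹ := by
      calc (∑ p ∈ G, ((p : ℝ))⁻¹) ≤ ∑ _p ∈ G, ((2 : ℝ) ^ k)⁻¹ :=
            Finset.sum_le_sum hterm
      _ = G.card * ((2 : ℝ) ^ k)⁻¹ := by
            rw [Finset.sum_const, nsmul_eq_mul]
    refine hsum.trans ?_
    have hkpos : (0 : ℝ) < k := by exact_mod_cast hk1
    have hcard' : ((G.card : ℝ)) ≤ 2 ^ (k + 2) / k := by
      rw [le_div_iff₀ hkpos]; exact hcard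
    calc (G.card : ℝ) * ((2 : ℝ) ^ k)⁻¹ ≤ (2 ^ (k + 2) / k) * ((2 : ℝ) ^ k)⁻¹ :=
          mul_le_mul_of_nonneg_right hcard' (by positivity)
      _ = 4 * (k : ℝ)⁻¹ := by
          rw [pow_add]
          field_simp
          ring
  calc (∑ k ∈ Finset.Icc 1 K, ∑ p ∈ ((Finset.range (n + 1)).filter Nat.Prime).filter
          (fun p => Nat.log 2 p = k), ((p : ℝ))⁻¹)
      ≤ ∑ k ∈ Finset.Icc 1 K, 4 * (k : ℝ)⁻¹ := Finset.sum_le_sum hinner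
    _ = 4 * ∑ k ∈ Finset.Icc 1 K, (k : ℝ)⁻¹ := by rw [Finset.mul_sum]
    _ = 4 * (harmonic K : ℝ) := by
        rw [harmonic_eq_sum_Icc]
        push_cast
        norm_num
    _ ≤ 4 * (1 + Real.log K) := by
        have := harmonic_le_one_add_log K
        linarith

theorem eratosthenes_ops :
    ∃ C : ℝ, ∀ n : ℕ, 3 ≤ n →
      (∑ p ∈ (Finset.range (n + 1)).filter (fun p => p.Prime ∧ p ^ 2 ≤ n),
          ((n / p : ℕ) : ℝ)) ≤ C * n * Real.log (Real.log n) := by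
  have hlog3 : (1 : ℝ) < Real.log 3 := by
    rw [show (1:ℝ) = Real.log (Real.exp 1) by rw [Real.log_exp]]
    exact Real.log_lt_log (Real.exp_pos 1) (by linarith [Real.exp_one_lt_d9])
  set c : ℝ := Real.log (Real.log 3) with hc
  have hcpos : 0 < c := Real.log_pos hlog3
  refine ⟨8 + 16 / c, ?_⟩
  intro n hn
  have hn0 : (0 : ℝ) < n := by exact_mod_cast (by omega : 0 < n)
  have hlogn : Real.log 3 ≤ Real.log n :=
    Real.log_le_log (by norm_num) (by exact_mod_cast hn)
  have hlogn1 : (1 : ℝ) < Real.log n := lt_of_lt_of_le hlog3 hlogn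
  have hllogn : c ≤ Real.log (Real.log n) := Real.log_le_log (by linarith) hlogn
  have hllpos : 0 < Real.log (Real.log n) := lt_of_lt_of_le hcpos hllogn
  have step1 : (∑ p ∈ (Finset.range (n + 1)).filter (fun p => p.Prime ∧ p ^ 2 ≤ n),
        ((n / p : ℕ) : ℝ)) ≤
      ∑ p ∈ (Finset.range (n + 1)).filter Nat.Prime, (n : ℝ) * ((p : ℝ))⁻¹ := by
    calc (∑ p ∈ (Finset.range (n + 1)).filter (fun p => p.Prime ∧ p ^ 2 ≤ n),
          ((n / p : ℕ) : ℝ))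
        ≤ ∑ p ∈ (Finset.range (n + 1)).filter (fun p => p.Prime ∧ p ^ 2 ≤ n),
            (n : ℝ) * ((p : ℝ))⁻¹ := by
          apply Finset.sum_le_sum
          intro p hp
          rw [← div_eq_mul_inv]
          exact Nat.cast_div_le
      _ ≤ ∑ p ∈ (Finset.range (n + 1)).filter Nat.Prime, (n : ℝ) * ((p : ℝ))⁻¹ := by
          apply Finset.sum_le_sum_of_subset_of_nonneg
          · intro p hp
            simp only [Finset.mem_filter] at hp ⊢
            exact ⟨hp.1, hp.2.1⟩
          · intro p _ _
            positivity
  have step2 : ∑ p ∈ (Finset.range (n + 1)).filter Nat.Prime, (n : ℝ) * ((p : ℝ))⁻¹ ≤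
      (n : ℝ) * (4 * (1 + Real.log (Nat.log 2 n))) := by
    rw [← Finset.mul_sum]
    exact mul_le_mul_of_nonneg_left (erato_mertens n hn) hn0.le
  -- bound log (Nat.log 2 n) by 1 + log (log n)
  have hK1 : 1 ≤ Nat.log 2 n := (Nat.le_log_iff_pow_le (by norm_num) (by omega)).mpr
    (by simpa using (by omega : 2 ≤ n))
  have hKle : (Nat.log 2 n : ℝ) ≤ 2 * Real.log n := by
    have h1 : (2 : ℕ) ^ Nat.log 2 n ≤ n := Nat.pow_log_le_self 2 (by omega)
    have h2 : (Nat.log 2 n : ℝ) * Real.log 2 ≤ Real.log n := by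
      rw [← Real.log_pow]
      exact Real.log_le_log (by positivity) (by exact_mod_cast h1)
    nlinarith [Real.log_two_gt_d9, Real.log_nonneg (by exact_mod_cast hK1 :
      (1:ℝ) ≤ (Nat.log 2 n : ℝ))]
  have hlogK : Real.log (Nat.log 2 n) ≤ 1 + Real.log (Real.log n) := by
    calc Real.log (Nat.log 2 n) ≤ Real.log (2 * Real.log n) :=
          Real.log_le_log (by exact_mod_cast hK1) hKle
      _ = Real.log 2 + Real.log (Real.log n) :=
          Real.log_mul (by norm_num) (by linarith)
      _ ≤ 1 + Real.log (Real.log n) := by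
          linarith [Real.log_two_lt_d9]
  have key : (∑ p ∈ (Finset.range (n + 1)).filter (fun p => p.Prime ∧ p ^ 2 ≤ n),
        ((n / p : ℕ) : ℝ)) ≤ (n : ℝ) * (8 + 4 * Real.log (Real.log n)) := by
    refine step1.trans (step2.trans ?_)
    have : 4 * (1 + Real.log (Nat.log 2 n)) ≤ 8 + 4 * Real.log (Real.log n) := by
      linarith
    exact mul_le_mul_of_nonneg_left this hn0.le
  refine key.trans ?_
  have h8 : (8 : ℝ) ≤ 16 / c * Real.log (Real.log n) := by
    rw [div_mul_eq_mul_div, le_div_iff₀ hcpos]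
    nlinarith
  nlinarith [hllpos, hn0]
end

section
/- For natural numbers n ≥ 2 and 2 ≤ ℓ ≤ n, the sum over integers m in [n, n+ℓ] of ∑_{q ∣ m, q prime, q > ℓ} log q is O(ℓ log n). -/
open Finset

theorem large_prime_divisors_log_sum :
    ∃ C : ℝ, ∀ n ℓ : ℕ, 2 ≤ n → 2 ≤ ℓ → ℓ ≤ n →
      (∑ m ∈ Finset.Icc n (n + ℓ),
          ∑ q ∈ m.primeFactors.filter (fun q => ℓ < q), Real.log q)
        ≤ C * ℓ * Real.log n := by
  use 4
  intro n ℓ hn hl hln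
  have hn1 : (1:ℝ) < (n:ℝ) := by exact_mod_cast Nat.lt_of_lt_of_le one_lt_two hn
  have hlogn : 0 < Real.log n := Real.log_pos hn1
  have key : ∀ m ∈ Finset.Icc n (n + ℓ),
      (∑ q ∈ m.primeFactors.filter (fun q => ℓ < q), Real.log q)
        ≤ Real.log (2 * n) := by
    intro m hm
    rw [Finset.mem_Icc] at hm
    have hm0 : m ≠ 0 := by omega
    have h1 : (∑ q ∈ m.primeFactors.filter (fun q => ℓ < q), Real.log q)
        ≤ ∑ q ∈ m.primeFactors, Real.log q :=
      Finset.sum_le_sum_of_subset_of_nonneg (Finset.filter_subset _ _)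
        (fun q hq _ => Real.log_nonneg (by
          exact_mod_cast (Nat.prime_of_mem_primeFactors hq).one_lt.le))
    have h2 : (∑ q ∈ m.primeFactors, Real.log q)
        = Real.log (∏ q ∈ m.primeFactors, (q:ℝ)) :=
      (Real.log_prod (fun q hq => by
        exact_mod_cast (Nat.prime_of_mem_primeFactors hq).pos.ne')).symm
    have hdvd : (∏ q ∈ m.primeFactors, q) ≤ m :=
      Nat.le_of_dvd (Nat.pos_of_ne_zero hm0) (Nat.prod_primeFactors_dvd m)
    have h3 : Real.log (∏ q ∈ m.primeFactors, (q:ℝ)) ≤ Real.log m := by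
      rw [← Nat.cast_prod]
      have hpos : 0 < ∏ q ∈ m.primeFactors, q :=
        Finset.prod_pos (fun q hq => (Nat.prime_of_mem_primeFactors hq).pos)
      exact Real.log_le_log (by exact_mod_cast hpos) (by exact_mod_cast hdvd)
    have h4 : Real.log m ≤ Real.log (2 * n) := by
      apply Real.log_le_log (by positivity)
      have : m ≤ 2 * n := by omega
      exact_mod_cast this
    linarith
  have hsum : (∑ m ∈ Finset.Icc n (n + ℓ),
      ∑ q ∈ m.primeFactors.filter (fun q => ℓ < q), Real.log q)
      ≤ (ℓ + 1 : ℝ) * Real.log (2 * n) := by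
    calc _ ≤ ∑ _m ∈ Finset.Icc n (n + ℓ), Real.log (2 * n) :=
          Finset.sum_le_sum key
      _ = (ℓ + 1 : ℝ) * Real.log (2 * n) := by
          rw [Finset.sum_const, Nat.card_Icc,
            show n + ℓ + 1 - n = ℓ + 1 from by omega]
          push_cast
          ring
  have hlog2n : Real.log (2 * n) ≤ 2 * Real.log n := by
    have h2n : Real.log (2 * n) = Real.log 2 + Real.log n := by
      rw [Real.log_mul (by norm_num) (by positivity)]
    have : Real.log 2 ≤ Real.log n := Real.log_le_log (by norm_num) (by
      exact_mod_cast hn)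
    linarith
  have hℓ1 : (ℓ + 1 : ℝ) ≤ 2 * ℓ := by
    have : 1 ≤ ℓ := by omega
    have : (1:ℝ) ≤ ℓ := by exact_mod_cast this
    linarith
  have hlog2npos : 0 ≤ Real.log (2 * n) := Real.log_nonneg (by
    have : (1:ℝ) ≤ (n:ℝ) := hn1.le
    linarith)
  calc (∑ m ∈ Finset.Icc n (n + ℓ),
      ∑ q ∈ m.primeFactors.filter (fun q => ℓ < q), Real.log q)
      ≤ (ℓ + 1 : ℝ) * Real.log (2 * n) := hsum
    _ ≤ 2 * ℓ * Real.log (2 * n) := by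
        apply mul_le_mul_of_nonneg_right hℓ1 hlog2npos
    _ ≤ 2 * ℓ * (2 * Real.log n) := by
        apply mul_le_mul_of_nonneg_left hlog2n (by positivity)
    _ = 4 * ℓ * Real.log n := by ring
end
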